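/- Let H be a graph, v a vertex of H, and let H' be obtained from H by cleaving v: split v into two copies v_1 and v_2, distribute the edges incident to v between v_1 and v_2 according to a bipartition, and add an edge v_1v_2. Suppose the original cycle structure gives two edge-disjoint v_1-to-v_2 paths in H' not using the new edge. Then, for k = 1, 2, 3: if a vertex u is k-edge-connected to v in H, then u is k-edge-connected to each of v_1 and v_2 in H'. -/

import Mathlib

open SimpleGraph

universe u

variable {V : Type u}

/-- Two walks with the same endpoints are internally vertex-disjoint. -/
def IntDisjoint {G : SimpleGraph V} {x y : V} (p q : G.Walk x y) : Prop :=
  ∀ v ∈ p.support, v ∈ q.support → v = x ∨ v = y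

/-- There are `k` pairwise internally vertex-disjoint `x`-`y` paths in `G`. -/
def ConnK (G : SimpleGraph V) (k : ℕ) (x y : V) : Prop :=
  ∃ P : Fin k → G.Walk x y, (∀ i, (P i).IsPath) ∧
    ∀ i j, i ≠ j → IntDisjoint (P i) (P j)

/-- `G` is `(Q,r)`-vertex-connected. -/
def QRConn (G : SimpleGraph V) (Q : Set V) (r : V → ℕ) : Prop :=
  ∀ x ∈ Q, ∀ y ∈ Q, x ≠ y → ConnK G (min (r x) (r y)) x y

/-- Delete a vertex (isolate it). -/
def delV (G : SimpleGraph V) (v : V) : SimpleGraph V where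
  Adj a b := G.Adj a b ∧ a ≠ v ∧ b ≠ v
  symm := ⟨by intro a b h; exact ⟨h.1.symm, h.2.2, h.2.1⟩⟩
  loopless := ⟨by intro a h; exact G.loopless.irrefl a h.1⟩

/-- `G` is minimally `(Q,r)`-vertex-connected: it is `(Q,r)`-vertex-connected but
deleting any edge or any vertex destroys this property. -/
def MinQR (G : SimpleGraph V) (Q : Set V) (r : V → ℕ) : Prop :=
  QRConn G Q r ∧ (∀ e ∈ G.edgeSet, ¬ QRConn (G.deleteEdges {e}) Q r) ∧
    ∀ v : V, ¬ QRConn (delV G v) Q r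

/-- Biconnected: at least 3 vertices, connected, and no cut vertex. -/
def Biconnected (G : SimpleGraph V) : Prop :=
  3 ≤ Nat.card V ∧ G.Connected ∧ ∀ v : V, (SimpleGraph.induce {w | w ≠ v} G).Connected

/-- Three-vertex-connected: more than 3 vertices and removing any at most 2
vertices leaves the graph connected. -/
def ThreeConnected (G : SimpleGraph V) : Prop :=
  4 ≤ Nat.card V ∧ ∀ s : Set V, s.ncard ≤ 2 → (SimpleGraph.induce sᶜ G).Connected

/-- Degree of a vertex. -/
noncomputable def vdeg (G : SimpleGraph V) (v : V) : ℕ := (G.neighborSet v).ncard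

/-- The contracted version of `G`: suppress all degree-2 vertices.  Two vertices of
degree `≠ 2` are adjacent iff they are joined by a path all of whose internal
vertices have degree 2. -/
def suppress (G : SimpleGraph V) : SimpleGraph {v : V // vdeg G v ≠ 2} where
  Adj u v := u ≠ v ∧ ∃ p : G.Walk u.1 v.1, p.IsPath ∧
      ∀ w ∈ p.support, w ≠ u.1 → w ≠ v.1 → vdeg G w = 2
  symm := ⟨by
    rintro u v ⟨hne, p, hp, hint⟩
    refine ⟨hne.symm, p.reverse, hp.reverse, ?_⟩
    intro w hw h1 h2
    rw [SimpleGraph.Walk.support_reverse, List.mem_reverse] at hw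
    exact hint w hw h2 h1⟩
  loopless := ⟨by intro u h; exact h.1 rfl⟩

/-- The removal operation of Holton–Jackson–Saito–Wormald: delete the edge `uv`,
suppress any resulting degree-2 vertices and simplify parallel edges; the edge is
removable when the result is three-connected. -/
def Removable (G : SimpleGraph V) (u v : V) : Prop :=
  ThreeConnected (suppress (G.deleteEdges {s(u, v)}))

/-- There are `k` pairwise edge-disjoint `x`-`y` paths in `G`. -/
def EdgeConnK (G : SimpleGraph V) (k : ℕ) (x y : V) : Prop :=
  ∃ P : Fin k → G.Walk x y, (∀ i, (P i).IsPath) ∧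
    ∀ i j, i ≠ j → ∀ e ∈ (P i).edges, e ∉ (P j).edges

section MengerCore

variable {W : Type*} [DecidableEq W]

/-- out-degree of `x` in a finite set of directed edges. -/
def fOut (f : Finset (W × W)) (x : W) : ℕ := (f.filter fun p => p.1 = x).card

/-- in-degree of `x` in a finite set of directed edges. -/
def fIn (f : Finset (W × W)) (x : W) : ℕ := (f.filter fun p => p.2 = x).card

lemma fOut_erase {f : Finset (W × W)} {p : W × W} (hp : p ∈ f) (x : W) :
    fOut (f.erase p) x + (if p.1 = x then 1 else 0) = fOut f x := by
  unfold fOut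
  rw [Finset.filter_erase]
  by_cases h : p.1 = x
  · rw [if_pos h, Finset.card_erase_add_one (Finset.mem_filter.2 ⟨hp, h⟩)]
  · have hnm : p ∉ f.filter (fun q : W × W => q.1 = x) := fun hm => h (Finset.mem_filter.1 hm).2
    rw [if_neg h, Finset.erase_eq_of_notMem hnm, add_zero]

lemma fIn_erase {f : Finset (W × W)} {p : W × W} (hp : p ∈ f) (x : W) :
    fIn (f.erase p) x + (if p.2 = x then 1 else 0) = fIn f x := by
  unfold fIn
  rw [Finset.filter_erase]
  by_cases h : p.2 = x
  · rw [if_pos h, Finset.card_erase_add_one (Finset.mem_filter.2 ⟨hp, h⟩)]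
  · have hnm : p ∉ f.filter (fun q : W × W => q.2 = x) := fun hm => h (Finset.mem_filter.1 hm).2
    rw [if_neg h, Finset.erase_eq_of_notMem hnm, add_zero]

lemma fOut_insert {f : Finset (W × W)} {p : W × W} (hp : p ∉ f) (x : W) :
    fOut (insert p f) x = fOut f x + (if p.1 = x then 1 else 0) := by
  unfold fOut
  rw [Finset.filter_insert]
  by_cases h : p.1 = x
  · rw [if_pos h, if_pos h, Finset.card_insert_of_notMem (fun hm => hp (Finset.mem_filter.1 hm).1)]
  · rw [if_neg h, if_neg h, add_zero]

lemma fIn_insert {f : Finset (W × W)} {p : W × W} (hp : p ∉ f) (x : W) :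
    fIn (insert p f) x = fIn f x + (if p.2 = x then 1 else 0) := by
  unfold fIn
  rw [Finset.filter_insert]
  by_cases h : p.2 = x
  · rw [if_pos h, if_pos h, Finset.card_insert_of_notMem (fun hm => hp (Finset.mem_filter.1 hm).1)]
  · rw [if_neg h, if_neg h, add_zero]

lemma fIn_pos {f : Finset (W × W)} {p : W × W} (hp : p ∈ f) : 0 < fIn f p.2 :=
  Finset.card_pos.2 ⟨p, Finset.mem_filter.2 ⟨hp, rfl⟩⟩

lemma fOut_pos {f : Finset (W × W)} {p : W × W} (hp : p ∈ f) : 0 < fOut f p.1 :=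
  Finset.card_pos.2 ⟨p, Finset.mem_filter.2 ⟨hp, rfl⟩⟩

end MengerCore

section MoreCore

variable {W : Type*} [DecidableEq W]

lemma fD_erase {g : Finset (W × W)} {p : W × W} (hp : p ∈ g) (v : W) :
    (fOut (g.erase p) v : ℤ) - fIn (g.erase p) v
      = (fOut g v : ℤ) - fIn g v - (if v = p.1 then 1 else 0) + (if v = p.2 then 1 else 0) := by
  have h1 := fOut_erase hp v
  have h2 := fIn_erase hp v
  rcases eq_or_ne v p.1 with a | a <;> rcases eq_or_ne v p.2 with b2 | b2
  · rw [if_pos a, if_pos b2]; rw [if_pos a.symm] at h1; rw [if_pos b2.symm] at h2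
    push_cast; omega
  · rw [if_pos a, if_neg b2]; rw [if_pos a.symm] at h1
    rw [if_neg (fun h => b2 h.symm)] at h2; push_cast; omega
  · rw [if_neg a, if_pos b2]; rw [if_neg (fun h => a h.symm)] at h1
    rw [if_pos b2.symm] at h2; push_cast; omega
  · rw [if_neg a, if_neg b2]; rw [if_neg (fun h => a h.symm)] at h1
    rw [if_neg (fun h => b2 h.symm)] at h2; push_cast; omega

lemma fD_insert {g : Finset (W × W)} {p : W × W} (hp : p ∉ g) (v : W) :
    (fOut (insert p g) v : ℤ) - fIn (insert p g) v
      = (fOut g v : ℤ) - fIn g v + (if v = p.1 then 1 else 0) - (if v = p.2 then 1 else 0) := by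
  have h1 := fOut_insert hp v
  have h2 := fIn_insert hp v
  rcases eq_or_ne v p.1 with a | a <;> rcases eq_or_ne v p.2 with b2 | b2
  · rw [if_pos a, if_pos b2]; rw [if_pos a.symm] at h1; rw [if_pos b2.symm] at h2
    push_cast; omega
  · rw [if_pos a, if_neg b2]; rw [if_pos a.symm] at h1
    rw [if_neg (fun h => b2 h.symm)] at h2; push_cast; omega
  · rw [if_neg a, if_pos b2]; rw [if_neg (fun h => a h.symm)] at h1
    rw [if_pos b2.symm] at h2; push_cast; omega
  · rw [if_neg a, if_neg b2]; rw [if_neg (fun h => a h.symm)] at h1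
    rw [if_neg (fun h => b2 h.symm)] at h2; push_cast; omega

/-- Extract one trail from `x` to `b` out of a set of directed edges in which every
vertex other than `b` has out-degree at least its in-degree, and `x` has strictly
larger out-degree. -/
lemma extract {G : SimpleGraph W} (b : W) :
    ∀ (g : Finset (W × W)), (∀ p ∈ g, G.Adj p.1 p.2) →
      ∀ x, x ≠ b → (∀ v, v ≠ b → fIn g v ≤ fOut g v) → fIn g x < fOut g x →
      ∃ (w : G.Walk x b) (g' : Finset (W × W)), g' ⊆ g ∧
        (∀ e ∈ w.edges, ∃ p : W × W, p ∈ g ∧ p ∉ g' ∧ e = s(p.1, p.2)) ∧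
        ∀ v, (fOut g' v : ℤ) - fIn g' v =
          (fOut g v : ℤ) - fIn g v - (if v = x then 1 else 0) + (if v = b then 1 else 0) := by
  intro g
  induction g using Finset.strongInduction with
  | _ g ih =>
  intro hAdj x hxb hI hx
  have hne : (g.filter fun p : W × W => p.1 = x).Nonempty :=
    Finset.card_pos.1 (lt_of_le_of_lt (Nat.zero_le _) hx)
  obtain ⟨p, hpf⟩ := hne
  have hpg : p ∈ g := (Finset.mem_filter.1 hpf).1
  obtain ⟨p1, y⟩ := p
  have hp1 : p1 = x := (Finset.mem_filter.1 hpf).2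
  subst hp1
  have hadj : G.Adj p1 y := hAdj _ hpg
  have hxyne : p1 ≠ y := G.ne_of_adj hadj
  by_cases hyb : y = b
  · refine ⟨Walk.cons (hyb ▸ hadj) Walk.nil, g.erase (p1, y), Finset.erase_subset _ _, ?_, ?_⟩
    · intro e he
      simp only [Walk.edges_cons, Walk.edges_nil, List.mem_singleton] at he
      refine ⟨(p1, y), hpg, Finset.notMem_erase _ _, ?_⟩
      rw [he, hyb]
    · intro v
      have hfd := fD_erase hpg v
      dsimp only at hfd
      rw [hfd, hyb]
  · -- recurse on the erased set
    have hss : g.erase (p1, y) ⊂ g := Finset.erase_ssubset hpg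
    have hAdj' : ∀ p ∈ g.erase (p1, y), G.Adj p.1 p.2 :=
      fun q hq => hAdj q (Finset.erase_subset _ _ hq)
    have hOx : fOut (g.erase (p1, y)) p1 + 1 = fOut g p1 := by
      have h := fOut_erase hpg p1; simpa using h
    have hOv : ∀ v, v ≠ p1 → fOut (g.erase (p1, y)) v = fOut g v := by
      intro v hv
      have h := fOut_erase hpg v
      simpa [if_neg (Ne.symm hv)] using h
    have hIy : fIn (g.erase (p1, y)) y + 1 = fIn g y := by
      have h := fIn_erase hpg y; simpa using h
    have hIv : ∀ v, v ≠ y → fIn (g.erase (p1, y)) v = fIn g v := by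
      intro v hv
      have h := fIn_erase hpg v
      simpa [if_neg (Ne.symm hv)] using h
    have hI' : ∀ v, v ≠ b → fIn (g.erase (p1, y)) v ≤ fOut (g.erase (p1, y)) v := by
      intro v hvb
      by_cases hvx : v = p1
      · subst hvx
        rw [hIv v hxyne]
        omega
      · by_cases hvy : v = y
        · subst hvy
          rw [hOv v hvx]
          have h := hI v hvb
          omega
        · rw [hOv v hvx, hIv v hvy]
          exact hI v hvb
    have hx' : fIn (g.erase (p1, y)) y < fOut (g.erase (p1, y)) y := by
      rw [hOv y (fun h => hxyne h.symm)]
      have h := hI y hyb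
      omega
    obtain ⟨w', g'', hsub, hedges, hD⟩ := ih _ hss hAdj' y hyb hI' hx'
    refine ⟨Walk.cons hadj w', g'', hsub.trans (Finset.erase_subset _ _), ?_, ?_⟩
    · intro e he
      rw [Walk.edges_cons] at he
      rcases List.mem_cons.1 he with he | he
      · exact ⟨(p1, y), hpg, fun h => Finset.notMem_erase (p1, y) g (hsub h), he⟩
      · obtain ⟨q, hq1, hq2, hq3⟩ := hedges e he
        exact ⟨q, Finset.erase_subset _ _ hq1, hq2, hq3⟩
    · intro v
      have hfd := fD_erase hpg v
      dsimp only at hfd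
      rw [hD v, hfd]
      ring

end MoreCore

section Decompose

variable {W : Type*} [DecidableEq W] {G : SimpleGraph W}

/-- Decompose a flow of value `k` into `k` pairwise edge-disjoint walks. -/
lemma decompose (a b : W) (hab : a ≠ b) :
    ∀ (k : ℕ) (f : Finset (W × W)), (∀ p ∈ f, G.Adj p.1 p.2) →
      (∀ p ∈ f, (p.2, p.1) ∉ f) →
      (∀ v, v ≠ a → v ≠ b → fOut f v = fIn f v) →
      (fOut f a = fIn f a + k) →
      ∃ P : Fin k → G.Walk a b,
        (∀ i, ∀ e ∈ (P i).edges, ∃ p : W × W, p ∈ f ∧ e = s(p.1, p.2)) ∧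
        ∀ i j, i ≠ j → ∀ e ∈ (P i).edges, e ∉ (P j).edges := by
  intro k
  induction k with
  | zero =>
    intro f _ _ _ _
    exact ⟨Fin.elim0, fun i => i.elim0, fun i => i.elim0⟩
  | succ k ihk =>
    intro f hAdj hrev hbal hval
    have hI : ∀ v, v ≠ b → fIn f v ≤ fOut f v := by
      intro v hvb
      by_cases hva : v = a
      · subst hva; omega
      · rw [hbal v hva hvb]
    have hx : fIn f a < fOut f a := by omega
    obtain ⟨w, f', hsub, hedges, hD⟩ := extract b f hAdj a hab hI hx
    have hAdj' : ∀ p ∈ f', G.Adj p.1 p.2 := fun p hp => hAdj p (hsub hp)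
    have hrev' : ∀ p ∈ f', (p.2, p.1) ∉ f' := fun p hp h => hrev p (hsub hp) (hsub h)
    have hbal' : ∀ v, v ≠ a → v ≠ b → fOut f' v = fIn f' v := by
      intro v hva hvb
      have h := hD v
      rw [if_neg hva, if_neg hvb, hbal v hva hvb] at h
      omega
    have hval' : fOut f' a = fIn f' a + k := by
      have h := hD a
      rw [if_pos rfl, if_neg hab] at h
      omega
    obtain ⟨P', hP'mem, hP'disj⟩ := ihk f' hAdj' hrev' hbal' hval'
    refine ⟨Fin.cons w P', ?_, ?_⟩
    · intro i
      refine Fin.cases ?_ ?_ i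
      · intro e he
        obtain ⟨p, hp1, _, hp3⟩ := hedges e he
        exact ⟨p, hp1, hp3⟩
      · intro j e he
        simp only [Fin.cons_succ] at he
        obtain ⟨p, hp1, hp3⟩ := hP'mem j e he
        exact ⟨p, hsub hp1, hp3⟩
    · -- pairwise edge-disjointness
      have key : ∀ (p q : W × W), p ∈ f → p ∉ f' → q ∈ f' → s(p.1, p.2) = s(q.1, q.2) → False := by
        intro p q hp1 hp2 hq1 hpq
        rcases Sym2.mk_eq_mk_iff.1 hpq with h | h
        · exact hp2 (h ▸ hq1)
        · apply hrev q (hsub hq1)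
          have h2 : p = (q.2, q.1) := h
          exact h2 ▸ hp1
      have key2 : ∀ e, (∃ p : W × W, p ∈ f ∧ p ∉ f' ∧ e = s(p.1, p.2)) →
          (∃ q : W × W, q ∈ f' ∧ e = s(q.1, q.2)) → False := by
        rintro e ⟨p, hp1, hp2, rfl⟩ ⟨q, hq1, hq2⟩
        exact key p q hp1 hp2 hq1 hq2
      intro i
      refine Fin.cases ?_ ?_ i
      · intro j
        refine Fin.cases ?_ ?_ j
        · intro h; exact absurd rfl h
        · intro j' _ e he hej
          simp only [Fin.cons_zero] at he
          simp only [Fin.cons_succ] at hej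
          exact key2 e (hedges e he) (hP'mem j' e hej)
      · intro i' j
        refine Fin.cases ?_ ?_ j
        · intro _ e he hej
          simp only [Fin.cons_succ] at he
          simp only [Fin.cons_zero] at hej
          exact key2 e (hedges e hej) (hP'mem i' e he)
        · intro j' hij' e he hej
          simp only [Fin.cons_succ] at he hej
          have hne : i' ≠ j' := fun h => hij' (by rw [h])
          exact hP'disj i' j' hne e he hej

end Decompose

section ChainNodup

variable {W : Type*}

lemma chain_concat {r : W → W → Prop} :
    ∀ (l : List W) (a c : W), List.Chain r a l →
      r ((a :: l).getLast (List.cons_ne_nil a l)) c → List.Chain r a (l ++ [c]) := by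
  intro l
  induction l with
  | nil =>
    intro a c _ hr
    exact List.Chain.cons (by simpa using hr) List.Chain.nil
  | cons y l' ih =>
    intro a c hchain hr
    simp only [List.Chain, List.isChain_cons_cons] at hchain
    refine List.Chain.cons hchain.1 (ih y c hchain.2 ?_)
    rwa [List.getLast_cons (List.cons_ne_nil y l')] at hr

lemma chain_nodup {r : W → W → Prop} {a b : W} (h : Relation.ReflTransGen r a b) :
    ∃ l : List W, List.Chain r a l ∧ (a :: l).getLast (List.cons_ne_nil a l) = b ∧
      (a :: l).Nodup := by
  induction h with
  | refl => exact ⟨[], List.Chain.nil, rfl, List.nodup_singleton a⟩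
  | @tail c d hac hcd ih =>
    obtain ⟨l, hchain, hlast, hnd⟩ := ih
    by_cases hd : d ∈ a :: l
    · obtain ⟨s, t, hst⟩ := List.append_of_mem hd
      cases s with
      | nil =>
        have had : a = d := by injection hst
        subst had
        exact ⟨[], List.Chain.nil, rfl, List.nodup_singleton a⟩
      | cons a' s' =>
        have ha : a = a' := by injection hst
        have hl : l = s' ++ d :: t := by injection hst
        subst ha
        refine ⟨s' ++ [d], ?_, ?_, ?_⟩
        · rw [hl] at hchain
          exact (List.isChain_cons_split.1 hchain).1
        · exact List.getLast_append_singleton (a :: s')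
        · have hsub : List.Sublist (a :: (s' ++ [d])) (a :: l) := by
            rw [hl]
            exact List.Sublist.cons₂ a
              (List.Sublist.append_left ((List.nil_sublist t).cons₂ d) s')
          exact hnd.sublist hsub
    · have hr : r ((a :: l).getLast (List.cons_ne_nil a l)) d := by rw [hlast]; exact hcd
      refine ⟨l ++ [d], chain_concat l a d hchain hr, ?_, ?_⟩
      · exact List.getLast_append_singleton (a :: l)
      · rw [show a :: (l ++ [d]) = (a :: l) ++ [d] from rfl, List.nodup_append']
        exact ⟨hnd, List.nodup_singleton d, by simpa [List.disjoint_singleton] using hd⟩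

end ChainNodup

section Aug

variable {W : Type*} [DecidableEq W] (G : SimpleGraph W)

/-- Residual step relation for a unit flow `f`. -/
def Res (f : Finset (W × W)) (x y : W) : Prop :=
  G.Adj x y ∧ ((y, x) ∈ f ∨ ((x, y) ∉ f ∧ (y, x) ∉ f))

lemma augstep (b : W) (f : Finset (W × W)) (hAdj : ∀ p ∈ f, G.Adj p.1 p.2)
    (hrev : ∀ p ∈ f, (p.2, p.1) ∉ f) :
    ∀ (l : List W) (x : W),
      List.Chain (Res G f) x l → (x :: l).getLast (List.cons_ne_nil x l) = b →
      (x :: l).Nodup →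
      ∃ f' : Finset (W × W), (∀ p ∈ f', G.Adj p.1 p.2) ∧ (∀ p ∈ f', (p.2, p.1) ∉ f') ∧
        (∀ p q : W, (p ∉ x :: l ∨ q ∉ x :: l) → ((p, q) ∈ f' ↔ (p, q) ∈ f)) ∧
        ∀ v, (fOut f' v : ℤ) - fIn f' v =
          (fOut f v : ℤ) - fIn f v + (if v = x then 1 else 0) - (if v = b then 1 else 0) := by
  intro l
  induction l with
  | nil =>
    intro x _ hlast _
    have hxb : x = b := by simpa using hlast
    subst hxb
    exact ⟨f, hAdj, hrev, fun p q _ => Iff.rfl, fun v => by ring⟩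
  | cons y l' ih =>
    intro x hchain hlast hnd
    simp only [List.Chain, List.isChain_cons_cons] at hchain
    obtain ⟨hres, hchain'⟩ := hchain
    have hlast' : (y :: l').getLast (List.cons_ne_nil y l') = b := by
      rwa [List.getLast_cons (List.cons_ne_nil y l')] at hlast
    have hx_notin : x ∉ y :: l' := (List.nodup_cons.1 hnd).1
    have hnd' : (y :: l').Nodup := (List.nodup_cons.1 hnd).2
    obtain ⟨f₁, hAdj₁, hrev₁, hagree₁, hD₁⟩ := ih y hchain' hlast' hnd'
    have hxy1 : ((x, y) ∈ f₁ ↔ (x, y) ∈ f) := hagree₁ x y (Or.inl hx_notin)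
    have hyx1 : ((y, x) ∈ f₁ ↔ (y, x) ∈ f) := hagree₁ y x (Or.inr hx_notin)
    have hadjxy : G.Adj x y := hres.1
    have hxny : x ≠ y := G.ne_of_adj hadjxy
    have hweak : ∀ p q : W, (p ∉ x :: y :: l' ∨ q ∉ x :: y :: l') →
        (p ∉ y :: l' ∨ q ∉ y :: l') := by
      rintro p q (h | h)
      · exact Or.inl fun hm => h (List.mem_cons_of_mem _ hm)
      · exact Or.inr fun hm => h (List.mem_cons_of_mem _ hm)
    have hxmem : x ∈ x :: y :: l' := List.mem_cons_self
    have hymem : y ∈ x :: y :: l' := List.mem_cons_of_mem _ (List.mem_cons_self)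
    rcases hres.2 with hcase | ⟨hno1, hno2⟩
    · -- cancel the flow pair (y, x)
      have hyxf1 : (y, x) ∈ f₁ := hyx1.2 hcase
      refine ⟨f₁.erase (y, x), fun p hp => hAdj₁ p (Finset.erase_subset _ _ hp),
        fun p hp h => hrev₁ p (Finset.erase_subset _ _ hp) (Finset.erase_subset _ _ h),
        ?_, ?_⟩
      · intro p q hpq
        have hne : (p, q) ≠ (y, x) := by
          intro h
          have hp : p = y := congrArg Prod.fst h
          have hq : q = x := congrArg Prod.snd h
          rcases hpq with h' | h'
          · exact h' (hp ▸ hymem)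
          · exact h' (hq ▸ hxmem)
        rw [Finset.mem_erase]
        simp only [hne, true_and, ne_eq, not_false_iff]
        exact hagree₁ p q (hweak p q hpq)
      · intro v
        have h1 := fD_erase hyxf1 v
        dsimp only at h1
        rw [h1, hD₁ v]
        ring
    · -- push new flow along (x, y)
      have hxyf1 : (x, y) ∉ f₁ := fun h => hno1 (hxy1.1 h)
      have hyxf1 : (y, x) ∉ f₁ := fun h => hno2 (hyx1.1 h)
      refine ⟨insert (x, y) f₁, ?_, ?_, ?_, ?_⟩
      · intro p hp
        rcases Finset.mem_insert.1 hp with rfl | hp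
        · exact hadjxy
        · exact hAdj₁ p hp
      · intro p hp h
        rcases Finset.mem_insert.1 hp with rfl | hp
        · rcases Finset.mem_insert.1 h with heq | h
          · exact hxny (by injection heq)
          · exact hyxf1 h
        · rcases Finset.mem_insert.1 h with heq | h
          · have hp2 : p.2 = x := congrArg Prod.fst heq
            have hp1 : p.1 = y := congrArg Prod.snd heq
            have : p = (y, x) := Prod.ext hp1 hp2
            exact hyxf1 (this ▸ hp)
          · exact hrev₁ p hp h
      · intro p q hpq
        have hne : (p, q) ≠ (x, y) := by
          intro h
          have hp : p = x := congrArg Prod.fst h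
          have hq : q = y := congrArg Prod.snd h
          rcases hpq with h' | h'
          · exact h' (hp ▸ hxmem)
          · exact h' (hq ▸ hymem)
        rw [Finset.mem_insert]
        simp only [hne, false_or]
        exact hagree₁ p q (hweak p q hpq)
      · intro v
        have h1 := fD_insert hxyf1 v
        dsimp only at h1
        rw [h1, hD₁ v]
        ring

end Aug

section Augment

variable {W : Type*} [DecidableEq W] (G : SimpleGraph W)

lemma augment (a b : W) (hab : a ≠ b) (k : ℕ)
    (hcut : ∀ S : Set W, a ∈ S → b ∉ S → ∃ T : Finset (Sym2 W), k ≤ T.card ∧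
      ∀ e ∈ T, e ∈ G.edgeSet ∧ ∃ x ∈ S, ∃ y, y ∉ S ∧ e = s(x, y))
    (f : Finset (W × W)) (j : ℕ) (hjk : j < k)
    (hAdj : ∀ p ∈ f, G.Adj p.1 p.2) (hrev : ∀ p ∈ f, (p.2, p.1) ∉ f)
    (hbal : ∀ v, v ≠ a → v ≠ b → fOut f v = fIn f v) (hval : fOut f a = fIn f a + j) :
    ∃ f' : Finset (W × W), (∀ p ∈ f', G.Adj p.1 p.2) ∧ (∀ p ∈ f', (p.2, p.1) ∉ f') ∧
      (∀ v, v ≠ a → v ≠ b → fOut f' v = fIn f' v) ∧ fOut f' a = fIn f' a + (j + 1) := by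
  classical
  set S : Set W := {x | Relation.ReflTransGen (Res G f) a x} with hSdef
  by_cases hb : b ∈ S
  · obtain ⟨l, hchain, hlast, hnd⟩ := chain_nodup hb
    obtain ⟨f', h1, h2, _, hD⟩ := augstep G b f hAdj hrev l a hchain hlast hnd
    refine ⟨f', h1, h2, ?_, ?_⟩
    · intro v hva hvb
      have h := hD v
      rw [if_neg hva, if_neg hvb, hbal v hva hvb] at h
      omega
    · have h := hD a
      rw [if_pos rfl, if_neg hab] at h
      omega
  · exfalso
    have haS : a ∈ S := Relation.ReflTransGen.refl
    obtain ⟨T, hTcard, hT⟩ := hcut S haS hb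
    have hcross : ∀ e ∈ T, ∃ p : W × W, p ∈ f ∧ p.1 ∈ S ∧ p.2 ∉ S ∧ e = s(p.1, p.2) := by
      intro e he
      obtain ⟨hedge, x, hxS, y, hyS, hexy⟩ := hT e he
      have hadj : G.Adj x y := (SimpleGraph.mem_edgeSet G).1 (hexy ▸ hedge)
      refine ⟨(x, y), ?_, hxS, hyS, hexy⟩
      by_contra hxy
      apply hyS
      refine Relation.ReflTransGen.tail hxS ⟨hadj, ?_⟩
      rcases Classical.em ((y, x) ∈ f) with h | h
      · exact Or.inl h
      · exact Or.inr ⟨hxy, h⟩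
    have hnoin : ∀ p : W × W, p ∈ f → p.2 ∈ S → p.1 ∈ S := by
      intro p hp h2
      refine Relation.ReflTransGen.tail h2 ⟨(hAdj p hp).symm, Or.inl ?_⟩
      simpa using hp
    -- counting
    set Fc : Finset (W × W) :=
      (f.filter fun p => p.1 ∈ S).filter (fun p => p.2 ∉ S) with hFcdef
    have hTle : T.card ≤ Fc.card := by
      choose g hg1 hg2 hg3 hg4 using hcross
      have hmap : ∀ e ∈ T, (if h : e ∈ T then g e h else (a, a)) ∈ Fc := by
        intro e he
        rw [dif_pos he, hFcdef, Finset.mem_filter, Finset.mem_filter]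
        exact ⟨⟨hg1 e he, hg2 e he⟩, hg3 e he⟩
      refine Finset.card_le_card_of_injOn _ hmap ?_
      intro e1 h1 e2 h2 heq
      have h1' : e1 ∈ T := Finset.mem_coe.1 h1
      have h2' : e2 ∈ T := Finset.mem_coe.1 h2
      dsimp only at heq
      rw [dif_pos h1', dif_pos h2'] at heq
      rw [hg4 e1 h1', hg4 e2 h2', heq]
    set T0 : Finset W := ((f.image Prod.fst ∪ f.image Prod.snd) ∪ {a}).filter (· ∈ S)
      with hT0def
    have haT0 : a ∈ T0 := by
      rw [hT0def, Finset.mem_filter]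
      exact ⟨Finset.mem_union_right _ (Finset.mem_singleton_self a), haS⟩
    have hsumA : (∑ v ∈ T0, ((fOut f v : ℤ) - fIn f v)) = j := by
      rw [Finset.sum_eq_single_of_mem a haT0]
      · rw [hval]; push_cast; ring
      · intro v hv hva
        have hvS : v ∈ S := (Finset.mem_filter.1 hv).2
        have hvb : v ≠ b := fun h => hb (h ▸ hvS)
        rw [hbal v hva hvb]; ring
    have hsumOut : (∑ v ∈ T0, fOut f v) = (f.filter fun p => p.1 ∈ S).card := by
      rw [Finset.card_eq_sum_card_fiberwise
        (f := Prod.fst) (t := T0) ?hmem]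
      case hmem =>
        intro p hp
        rw [Finset.mem_coe, Finset.mem_filter] at hp
        rw [Finset.mem_coe, hT0def, Finset.mem_filter]
        exact ⟨Finset.mem_union_left _ (Finset.mem_union_left _
          (Finset.mem_image_of_mem _ hp.1)), hp.2⟩
      refine Finset.sum_congr rfl ?_
      intro v hv
      have hvS : v ∈ S := (Finset.mem_filter.1 hv).2
      unfold fOut
      rw [Finset.filter_filter]
      congr 1
      apply Finset.filter_congr
      intro p _
      constructor
      · intro h; exact ⟨h ▸ hvS, h⟩
      · intro h; exact h.2
    have hsumIn : (∑ v ∈ T0, fIn f v) = (f.filter fun p => p.2 ∈ S).card := by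
      rw [Finset.card_eq_sum_card_fiberwise
        (f := Prod.snd) (t := T0) ?hmem2]
      case hmem2 =>
        intro p hp
        rw [Finset.mem_coe, Finset.mem_filter] at hp
        rw [Finset.mem_coe, hT0def, Finset.mem_filter]
        exact ⟨Finset.mem_union_left _ (Finset.mem_union_right _
          (Finset.mem_image_of_mem _ hp.1)), hp.2⟩
      refine Finset.sum_congr rfl ?_
      intro v hv
      have hvS : v ∈ S := (Finset.mem_filter.1 hv).2
      unfold fIn
      rw [Finset.filter_filter]
      congr 1
      apply Finset.filter_congr
      intro p _
      constructor
      · intro h; exact ⟨h ▸ hvS, h⟩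
      · intro h; exact h.2
    have hsplit : ((f.filter fun p => p.1 ∈ S).filter fun p => p.2 ∈ S).card + Fc.card
        = (f.filter fun p => p.1 ∈ S).card := by
      rw [hFcdef]
      exact Finset.card_filter_add_card_filter_not _
    have hinS : (f.filter fun p => p.2 ∈ S)
        = ((f.filter fun p => p.1 ∈ S).filter fun p => p.2 ∈ S) := by
      ext p
      simp only [Finset.mem_filter]
      constructor
      · intro h
        exact ⟨⟨h.1, hnoin p h.1 h.2⟩, h.2⟩
      · intro h
        exact ⟨h.1.1, h.2⟩
    have hFcj : (Fc.card : ℤ) = j := by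
      have : (∑ v ∈ T0, ((fOut f v : ℤ) - fIn f v))
          = (∑ v ∈ T0, (fOut f v : ℤ)) - (∑ v ∈ T0, (fIn f v : ℤ)) := by
        rw [Finset.sum_sub_distrib]
      rw [this] at hsumA
      have h1 : (∑ v ∈ T0, (fOut f v : ℤ)) = ((f.filter fun p => p.1 ∈ S).card : ℤ) := by
        rw [← hsumOut]; push_cast; rfl
      have h2 : (∑ v ∈ T0, (fIn f v : ℤ)) = ((f.filter fun p => p.2 ∈ S).card : ℤ) := by
        rw [← hsumIn]; push_cast; rfl
      rw [h1, h2, hinS] at hsumA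
      have := hsplit
      push_cast at hsumA ⊢
      omega
    have : (k : ℤ) ≤ j := by
      have h1 : (k : ℤ) ≤ T.card := by exact_mod_cast hTcard
      have h2 : (T.card : ℤ) ≤ Fc.card := by exact_mod_cast hTle
      omega
    omega

end Augment

section Menger

variable {W : Type*} [DecidableEq W] (G : SimpleGraph W)

/-- Edge-Menger: if every `a`-`b` edge cut admits `k` distinct crossing edges, then
there are `k` pairwise edge-disjoint `a`-`b` paths. -/
lemma menger (a b : W) (hab : a ≠ b) (k : ℕ)
    (hcut : ∀ S : Set W, a ∈ S → b ∉ S → ∃ T : Finset (Sym2 W), k ≤ T.card ∧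
      ∀ e ∈ T, e ∈ G.edgeSet ∧ ∃ x ∈ S, ∃ y, y ∉ S ∧ e = s(x, y)) :
    ∃ P : Fin k → G.Walk a b, (∀ i, (P i).IsPath) ∧
      ∀ i j, i ≠ j → ∀ e ∈ (P i).edges, e ∉ (P j).edges := by
  have hflow : ∀ j, j ≤ k → ∃ f : Finset (W × W), (∀ p ∈ f, G.Adj p.1 p.2) ∧
      (∀ p ∈ f, (p.2, p.1) ∉ f) ∧ (∀ v, v ≠ a → v ≠ b → fOut f v = fIn f v) ∧
      fOut f a = fIn f a + j := by
    intro j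
    induction j with
    | zero =>
      intro _
      exact ⟨∅, by simp, by simp, fun v _ _ => rfl, by simp [fOut, fIn]⟩
    | succ j ih =>
      intro hj
      obtain ⟨f, h1, h2, h3, h4⟩ := ih (Nat.le_of_succ_le hj)
      exact augment G a b hab k hcut f j (Nat.lt_of_lt_of_le (Nat.lt_succ_self j) hj)
        h1 h2 h3 h4
  obtain ⟨f, h1, h2, h3, h4⟩ := hflow k le_rfl
  obtain ⟨P, _, hPdisj⟩ := decompose a b hab k f h1 h2 h3 h4
  refine ⟨fun i => (P i).bypass, fun i => SimpleGraph.Walk.bypass_isPath (P i), ?_⟩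
  intro i j hij e he1 he2
  exact hPdisj i j hij e (SimpleGraph.Walk.edges_bypass_subset (P i) he1)
    (SimpleGraph.Walk.edges_bypass_subset (P j) he2)

end Menger

section Apply

variable {W : Type*}

lemma cross_of_walk {G : SimpleGraph W} :
    ∀ {x y : W} (w : G.Walk x y) (S : Set W), x ∈ S → y ∉ S →
      ∃ e ∈ w.edges, e ∈ G.edgeSet ∧ ∃ p ∈ S, ∃ q, q ∉ S ∧ e = s(p, q) := by
  intro x y w
  induction w with
  | nil =>
    intro S hx hy
    exact absurd hx hy
  | @cons x z y h w' ih =>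
    intro S hx hy
    by_cases hz : z ∈ S
    · obtain ⟨e, he, hrest⟩ := ih S hz hy
      exact ⟨e, List.mem_cons_of_mem _ he, hrest⟩
    · refine ⟨s(x, z), ?_, ?_, x, hx, z, hz, rfl⟩
      · rw [SimpleGraph.Walk.edges_cons]
        exact List.mem_cons_self
      · exact (SimpleGraph.mem_edgeSet G).2 h

end Apply

section Psi

variable {V : Type u}

open scoped Classical in
/-- The canonical injection of edges of `H` into edges of the cleaved graph. -/
noncomputable def psiMap (v : V) (B : Set V) : Sym2 V → Sym2 (Option V) :=
  Sym2.lift ⟨fun a b =>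
    if a = v ∧ b ∈ B then s(some b, (none : Option V))
    else if b = v ∧ a ∈ B then s(some a, (none : Option V))
    else s(some a, some b), by
      intro a b
      by_cases h1 : a = v ∧ b ∈ B <;> by_cases h2 : b = v ∧ a ∈ B
      · simp only [if_pos h1, if_pos h2]
        rw [h1.1, h2.1]
      · simp only [if_pos h1, if_neg h2]
      · simp only [if_neg h1, if_pos h2]
      · simp only [if_neg h1, if_neg h2, Sym2.eq_swap]⟩

lemma psiMap_leftInv (v : V) (B : Set V) (e : Sym2 V) :
    Sym2.map (fun o => o.getD v) (psiMap v B e) = e := by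
  induction e with
  | _ x y =>
    rw [psiMap, Sym2.lift_mk]
    dsimp only
    split_ifs with h1 h2
    · rw [Sym2.map_pair_eq]
      dsimp only [Option.getD]
      rw [h1.1]
      exact Sym2.eq_swap
    · rw [Sym2.map_pair_eq]
      dsimp only [Option.getD]
      rw [h2.1]
    · rw [Sym2.map_pair_eq]
      rfl

lemma psiMap_inj (v : V) (B : Set V) {e1 e2 : Sym2 V}
    (h : psiMap v B e1 = psiMap v B e2) : e1 = e2 := by
  rw [← psiMap_leftInv v B e1, ← psiMap_leftInv v B e2, h]

lemma psiMap_nonv {v : V} {B : Set V} {a b : V} (ha : a ≠ v) (hb : b ≠ v) :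
    psiMap v B (s(a, b)) = s(some a, some b) := by
  rw [psiMap, Sym2.lift_mk]
  dsimp only
  rw [if_neg (fun h => ha h.1), if_neg (fun h => hb h.1)]

lemma psiMap_lastB {v : V} {B : Set V} {x : V} (hx : x ≠ v) (hxB : x ∈ B) :
    psiMap v B (s(x, v)) = s(some x, (none : Option V)) := by
  rw [psiMap, Sym2.lift_mk]
  dsimp only
  rw [if_neg (fun h => hx h.1), if_pos ⟨rfl, hxB⟩]

lemma psiMap_lastA {v : V} {B : Set V} {x : V} (hx : x ≠ v) (hxB : x ∉ B) :
    psiMap v B (s(x, v)) = s(some x, some v) := by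
  rw [psiMap, Sym2.lift_mk]
  dsimp only
  rw [if_neg (fun h => hx h.1), if_neg (fun h => hxB h.2)]

end Psi

section Lift

variable {V : Type u}

lemma lift_walk {H : SimpleGraph V} {v : V} {B : Set V}
    {H' : SimpleGraph (Option V)}
    (hsome : ∀ a b : V, H'.Adj (some a) (some b) ↔
        (H.Adj a b ∧ ¬(a = v ∧ b ∈ B) ∧ ¬(b = v ∧ a ∈ B)))
    (hnone : ∀ a : V, H'.Adj (some a) none ↔ (a = v ∨ a ∈ B)) :
    ∀ (n : ℕ) {x : V} (p : H.Walk x v), p.length = n → x ≠ v → p.IsPath →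
      ∃ t : Option V, (t = some v ∨ t = none) ∧
        ∃ w : H'.Walk (some x) t, w.edges = p.edges.map (psiMap v B) := by
  intro n
  induction n using Nat.strong_induction_on with
  | _ n ih =>
  intro x p hlen hxv hp
  cases p with
  | nil => exact absurd rfl hxv
  | @cons _ y _ hadj q =>
    by_cases hyv : y = v
    · subst hyv
      have hq : q = SimpleGraph.Walk.nil :=
        (SimpleGraph.Walk.isPath_iff_eq_nil (p := q)).1 hp.of_cons
      subst hq
      by_cases hxB : x ∈ B
      · refine ⟨none, Or.inr rfl,
          SimpleGraph.Walk.cons ((hnone x).2 (Or.inr hxB)) SimpleGraph.Walk.nil, ?_⟩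
        simp only [SimpleGraph.Walk.edges_cons, SimpleGraph.Walk.edges_nil,
          List.map_cons, List.map_nil]
        rw [psiMap_lastB hxv hxB]
      · have hadj' : H'.Adj (some x) (some y) :=
          (hsome x y).2 ⟨hadj, fun h => hxv h.1, fun h => hxB h.2⟩
        refine ⟨some y, Or.inl rfl,
          SimpleGraph.Walk.cons hadj' SimpleGraph.Walk.nil, ?_⟩
        simp only [SimpleGraph.Walk.edges_cons, SimpleGraph.Walk.edges_nil,
          List.map_cons, List.map_nil]
        rw [psiMap_lastA hxv hxB]
    · have hlen' : q.length < n := by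
        rw [← hlen]
        simp [SimpleGraph.Walk.length_cons]
      obtain ⟨t, ht, w', hw'⟩ := ih q.length hlen' q rfl hyv hp.of_cons
      have hadj' : H'.Adj (some x) (some y) :=
        (hsome x y).2 ⟨hadj, fun h => hxv h.1, fun h => hyv h.1⟩
      refine ⟨t, ht, SimpleGraph.Walk.cons hadj' w', ?_⟩
      simp only [SimpleGraph.Walk.edges_cons, List.map_cons]
      rw [hw', psiMap_nonv hxv hyv]

end Lift


/-- Let `H'` be obtained from `H` by cleaving the vertex `v` with
edge bipartition `(A, B)`: `v` itself plays the role of the copy `v₁`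
(as `some v`) and `none` is the new copy `v₂`, joined to `v₁` by a new edge.
If the two copies are 3-edge-connected in `H'`, then for `k = 1, 2, 3`, any
vertex `u` that is `k`-edge-connected to `v` in `H` is `k`-edge-connected to
both copies of `v` in `H'`. -/
theorem stmt_15 (H : SimpleGraph V) (v : V) (A B : Set V)
    (hpart : A ∪ B = H.neighborSet v) (hdisj : Disjoint A B)
    (H' : SimpleGraph (Option V))
    (hsome : ∀ a b : V, H'.Adj (some a) (some b) ↔
        (H.Adj a b ∧ ¬(a = v ∧ b ∈ B) ∧ ¬(b = v ∧ a ∈ B)))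
    (hnone : ∀ a : V, H'.Adj (some a) none ↔ (a = v ∨ a ∈ B))
    (h3 : EdgeConnK H' 3 (some v) none) :
    ∀ k ∈ ({1, 2, 3} : Set ℕ), ∀ u : V, EdgeConnK H k u v →
      EdgeConnK H' k (some u) (some v) ∧ EdgeConnK H' k (some u) none := by
  classical
  intro k hk u hu
  have hk3 : k ≤ 3 := by
    simp only [Set.mem_insert_iff, Set.mem_singleton_iff] at hk
    rcases hk with rfl | rfl | rfl <;> norm_num
  by_cases huv : u = v
  · subst huv
    constructor
    · exact ⟨fun _ => SimpleGraph.Walk.nil, fun _ => SimpleGraph.Walk.IsPath.nil,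
        fun i j _ e he => by simp [SimpleGraph.Walk.edges_nil] at he⟩
    · obtain ⟨Q, hQ1, hQ2⟩ := h3
      exact ⟨fun i => Q (Fin.castLE hk3 i), fun i => hQ1 _,
        fun i j hij => hQ2 _ _ (fun h => hij (Fin.castLE_injective hk3 h))⟩
  · obtain ⟨p, hp, hpd⟩ := hu
    obtain ⟨Q, hQ1, hQ2⟩ := h3
    have hlift := fun i : Fin k =>
      lift_walk hsome hnone (p i).length (p i) rfl huv (hp i)
    choose t ht w hw using hlift
    constructor
    · -- k edge-disjoint paths from `some u` to `some v`
      have hne : (some u : Option V) ≠ some v := fun h => huv (Option.some_injective V h)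
      have hcut : ∀ S : Set (Option V), (some u : Option V) ∈ S → (some v : Option V) ∉ S →
          ∃ T : Finset (Sym2 (Option V)), k ≤ T.card ∧
            ∀ e ∈ T, e ∈ H'.edgeSet ∧
              ∃ x ∈ S, ∃ y, y ∉ S ∧ e = s(x, y) := by
        intro S haS hbS
        by_cases hnS : (none : Option V) ∈ S
        · have hc : ∀ j : Fin 3, ∃ e ∈ ((Q j).reverse).edges, e ∈ H'.edgeSet ∧
              ∃ x ∈ S, ∃ y, y ∉ S ∧ e = s(x, y) :=
            fun j => cross_of_walk ((Q j).reverse) S hnS hbS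
          choose g hg1 hg2 using hc
          have hginj : Function.Injective g := by
            intro j1 j2 hgj
            by_contra hne'
            have h1 : g j1 ∈ (Q j1).edges := by
              have h := hg1 j1
              rwa [SimpleGraph.Walk.edges_reverse, List.mem_reverse] at h
            have h2 : g j2 ∈ (Q j2).edges := by
              have h := hg1 j2
              rwa [SimpleGraph.Walk.edges_reverse, List.mem_reverse] at h
            exact hQ2 j1 j2 hne' (g j1) h1 (hgj ▸ h2)
          refine ⟨Finset.image g Finset.univ, ?_, ?_⟩
          · rw [Finset.card_image_of_injective _ hginj, Finset.card_univ, Fintype.card_fin]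
            exact hk3
          · intro e he
            obtain ⟨j, _, rfl⟩ := Finset.mem_image.1 he
            exact hg2 j
        · have htS : ∀ i : Fin k, t i ∉ S := by
            intro i
            rcases ht i with h | h
            · rw [h]; exact hbS
            · rw [h]; exact hnS
          have hc : ∀ i : Fin k, ∃ e ∈ (w i).edges, e ∈ H'.edgeSet ∧
              ∃ x ∈ S, ∃ y, y ∉ S ∧ e = s(x, y) :=
            fun i => cross_of_walk (w i) S haS (htS i)
          choose g hg1 hg2 using hc
          have hginj : Function.Injective g := by
            intro i1 i2 hgj
            by_contra hne'
            have h1 := hg1 i1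
            have h2 := hg1 i2
            rw [hw i1] at h1
            rw [hw i2] at h2
            obtain ⟨e1, he1, heq1⟩ := List.mem_map.1 h1
            obtain ⟨e2, he2, heq2⟩ := List.mem_map.1 h2
            have he12 : e1 = e2 := psiMap_inj v B (by rw [heq1, heq2, hgj])
            exact hpd i1 i2 hne' e1 he1 (he12 ▸ he2)
          refine ⟨Finset.image g Finset.univ, ?_, ?_⟩
          · rw [Finset.card_image_of_injective _ hginj, Finset.card_univ, Fintype.card_fin]
          · intro e he
            obtain ⟨i, _, rfl⟩ := Finset.mem_image.1 he
            exact hg2 i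
      obtain ⟨P, hP1, hP2⟩ := menger H' (some u) (some v) hne k hcut
      exact ⟨P, hP1, hP2⟩
    · -- k edge-disjoint paths from `some u` to `none`
      have hcut : ∀ S : Set (Option V), (some u : Option V) ∈ S → (none : Option V) ∉ S →
          ∃ T : Finset (Sym2 (Option V)), k ≤ T.card ∧
            ∀ e ∈ T, e ∈ H'.edgeSet ∧
              ∃ x ∈ S, ∃ y, y ∉ S ∧ e = s(x, y) := by
        intro S haS hbS
        by_cases hvS : (some v : Option V) ∈ S
        · have hc : ∀ j : Fin 3, ∃ e ∈ (Q j).edges, e ∈ H'.edgeSet ∧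
              ∃ x ∈ S, ∃ y, y ∉ S ∧ e = s(x, y) :=
            fun j => cross_of_walk (Q j) S hvS hbS
          choose g hg1 hg2 using hc
          have hginj : Function.Injective g := by
            intro j1 j2 hgj
            by_contra hne'
            exact hQ2 j1 j2 hne' (g j1) (hg1 j1) (hgj ▸ hg1 j2)
          refine ⟨Finset.image g Finset.univ, ?_, ?_⟩
          · rw [Finset.card_image_of_injective _ hginj, Finset.card_univ, Fintype.card_fin]
            exact hk3
          · intro e he
            obtain ⟨j, _, rfl⟩ := Finset.mem_image.1 he
            exact hg2 j
        · have htS : ∀ i : Fin k, t i ∉ S := by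
            intro i
            rcases ht i with h | h
            · rw [h]; exact hvS
            · rw [h]; exact hbS
          have hc : ∀ i : Fin k, ∃ e ∈ (w i).edges, e ∈ H'.edgeSet ∧
              ∃ x ∈ S, ∃ y, y ∉ S ∧ e = s(x, y) :=
            fun i => cross_of_walk (w i) S haS (htS i)
          choose g hg1 hg2 using hc
          have hginj : Function.Injective g := by
            intro i1 i2 hgj
            by_contra hne'
            have h1 := hg1 i1
            have h2 := hg1 i2
            rw [hw i1] at h1
            rw [hw i2] at h2
            obtain ⟨e1, he1, heq1⟩ := List.mem_map.1 h1
            obtain ⟨e2, he2, heq2⟩ := List.mem_map.1 h2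
            have he12 : e1 = e2 := psiMap_inj v B (by rw [heq1, heq2, hgj])
            exact hpd i1 i2 hne' e1 he1 (he12 ▸ he2)
          refine ⟨Finset.image g Finset.univ, ?_, ?_⟩
          · rw [Finset.card_image_of_injective _ hginj, Finset.card_univ, Fintype.card_fin]
          · intro e he
            obtain ⟨i, _, rfl⟩ := Finset.mem_image.1 he
            exact hg2 i
      obtain ⟨P, hP1, hP2⟩ := menger H' (some u) none (Option.some_ne_none u) k hcut
      exact ⟨P, hP1, hP2⟩
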